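/- Let G be a minimally t-tough, claw-free graph and e = uv a non-bridge edge of G with D(e) ≠ ∅. If |S(e)| ≥ ⌈3t⌉, then for every component Cᵢ of G−S(e) other than C(e), |N_{S(e)}(C(e)) ∩ N_{S(e)}(Cᵢ)| ≤ 2t−1. -/

import Mathlib

open SimpleGraph

variable {V : Type*}

/-- `numComponents G S` is the number of connected components of `G − S`,
the graph obtained from `G` by deleting the vertices of `S`. -/
noncomputable def numComponents (G : SimpleGraph V) (S : Set V) : ℕ :=
  Nat.card ((G.induce Sᶜ).ConnectedComponent)

/-- `HasToughness G t` says that the toughness of `G` is exactly `t`, i.e.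
`t = min { |S| / w(G−S) : S ⊆ V(G), w(G−S) ≥ 2 }`.  (For a complete graph no
such `S` exists and this predicate never holds, matching `τ(G) = ∞`.) -/
def HasToughness [Fintype V] (G : SimpleGraph V) (t : ℚ) : Prop :=
  (∀ S : Finset V, 2 ≤ numComponents G ↑S →
      t ≤ (S.card : ℚ) / (numComponents G ↑S : ℚ)) ∧
  ∃ S : Finset V, 2 ≤ numComponents G ↑S ∧
      t = (S.card : ℚ) / (numComponents G ↑S : ℚ)

/-- `G` is minimally `t`-tough: `τ(G) = t` and `τ(G − e) < t` for every edge
`e` of `G` (i.e. some vertex set witnesses a ratio `< t` in `G − e`). -/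
def MinimallyTough [Fintype V] (G : SimpleGraph V) (t : ℚ) : Prop :=
  HasToughness G t ∧
  ∀ u v : V, G.Adj u v →
    ∃ S : Finset V, 2 ≤ numComponents (G.deleteEdges {s(u, v)}) ↑S ∧
      (S.card : ℚ) / (numComponents (G.deleteEdges {s(u, v)}) ↑S : ℚ) < t

/-- `G` is claw-free: it has no induced subgraph isomorphic to `K_{1,3}`. -/
def ClawFree (G : SimpleGraph V) : Prop :=
  ¬ ∃ v a b c : V, a ≠ b ∧ a ≠ c ∧ b ≠ c ∧
      G.Adj v a ∧ G.Adj v b ∧ G.Adj v c ∧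
      ¬ G.Adj a b ∧ ¬ G.Adj a c ∧ ¬ G.Adj b c

/-- The vertex connectivity `κ(G)` of a noncomplete graph: the least cardinality
of a vertex set whose deletion disconnects `G`. -/
noncomputable def vconn [Fintype V] (G : SimpleGraph V) : ℕ :=
  sInf {k | ∃ S : Finset V, S.card = k ∧ 2 ≤ numComponents G ↑S}

/-- The vertex set of the connected component of `G − S` containing `u`
(empty if `u ∈ S`). -/
def compOf (G : SimpleGraph V) (S : Set V) (u : V) : Set V :=
  {w | ∃ (hu : u ∈ Sᶜ) (hw : w ∈ Sᶜ), (G.induce Sᶜ).Reachable ⟨u, hu⟩ ⟨w, hw⟩}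

/-- `Dset G S u` is the union of the components of `G − S` other than the one
containing `u`. -/
def Dset (G : SimpleGraph V) (S : Set V) (u : V) : Set V :=
  Sᶜ \ compOf G S u

/-- `nbrsIn G X Y = N_X(Y)`: the set of vertices in `X − Y` adjacent (in `G`)
to some vertex of `Y`. -/
def nbrsIn (G : SimpleGraph V) (X Y : Set V) : Set V :=
  {x | x ∈ X \ Y ∧ ∃ y ∈ Y, G.Adj x y}

/-- The edge `uv` is a bridge of the graph `G − S`: both endpoints survive the
deletion of `S`, they are adjacent, and deleting the edge `uv` increases the
number of connected components of `G − S`. -/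
def IsBridgeIn (G : SimpleGraph V) (S : Set V) (u v : V) : Prop :=
  u ∉ S ∧ v ∉ S ∧ G.Adj u v ∧
    numComponents G S < numComponents (G.deleteEdges {s(u, v)}) S

/-- `GoodCut G t u v S`: `S` is a vertex set with `w(G−S) ≤ |S|/t`,
`w((G−e)−S) > |S|/t` and such that `e = uv` is a bridge in `G − S`. -/
def GoodCut [Fintype V] (G : SimpleGraph V) (t : ℚ) (u v : V) (S : Finset V) : Prop :=
  (numComponents G ↑S : ℚ) ≤ (S.card : ℚ) / t ∧
  (S.card : ℚ) / t < (numComponents (G.deleteEdges {s(u, v)}) ↑S : ℚ) ∧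
  IsBridgeIn G ↑S u v

/-- `S` is a minimum-cardinality vertex set as guaranteed by Lemma 2.2,
i.e. `S = S(e)` for the edge `e = uv`. -/
def IsMinGoodCut [Fintype V] (G : SimpleGraph V) (t : ℚ) (u v : V) (S : Finset V) : Prop :=
  GoodCut G t u v S ∧ ∀ S' : Finset V, GoodCut G t u v S' → S.card ≤ S'.card

/-- `x` is contained in some `2t`-vertex-cut of `G`. -/
def InTwoTCut [Fintype V] (G : SimpleGraph V) (t : ℚ) (x : V) : Prop :=
  ∃ T : Finset V, (T.card : ℚ) = 2 * t ∧ 2 ≤ numComponents G ↑T ∧ x ∈ T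

/-- A fragment of `G`: the vertex set of a connected component of `G − T` for
some minimum vertex cut `T` of `G`. -/
def IsGraphFragment [Fintype V] (G : SimpleGraph V) (A : Set V) : Prop :=
  ∃ (T : Finset V) (a : V), T.card = vconn G ∧ 2 ≤ numComponents G ↑T ∧
    a ∉ T ∧ A = compOf G ↑T a

/-- An atom of `G`: a fragment of minimum cardinality. -/
def IsGraphAtom [Fintype V] (G : SimpleGraph V) (A : Set V) : Prop :=
  IsGraphFragment G A ∧ ∀ B : Set V, IsGraphFragment G B → A.ncard ≤ B.ncard

/-- transfer reachability from an induced subgraph to a larger induced subgraph -/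
lemma aux_reach_transfer (G : SimpleGraph V) {A B : Set V} (hAB : A ⊆ B) :
    ∀ {a b : ↥A}, (G.induce A).Reachable a b →
      (G.induce B).Reachable ⟨a.1, hAB a.2⟩ ⟨b.1, hAB b.2⟩ := by
  intro a b h
  obtain ⟨p⟩ := h
  induction p with
  | nil => exact Reachable.refl _
  | @cons a c b hadj p ih =>
      have hadj' : (G.induce B).Adj ⟨a.1, hAB a.2⟩ ⟨c.1, hAB c.2⟩ := hadj
      exact hadj'.reachable.trans ih

/-- if a set `c` is closed under adjacency avoiding `T`, then it is closed under
reachability in `G − T`. -/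
lemma aux_closure (G : SimpleGraph V) {T c : Set V}
    (hc : ∀ x ∈ c, ∀ y, y ∉ T → G.Adj x y → y ∈ c) :
    ∀ {a b : ↥(Tᶜ)}, (G.induce Tᶜ).Reachable a b → a.1 ∈ c → b.1 ∈ c := by
  intro a b h
  obtain ⟨p⟩ := h
  induction p with
  | nil => exact id
  | @cons a d b hadj p ih =>
      intro hac
      exact ih (hc a.1 hac d.1 d.2 hadj)

lemma aux_two_le (G : SimpleGraph V) [Fintype V] {T : Set V} {a b : V}
    (ha : a ∈ Tᶜ) (hb : b ∈ Tᶜ)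
    (hnr : ¬ (G.induce Tᶜ).Reachable ⟨a, ha⟩ ⟨b, hb⟩) :
    2 ≤ numComponents G T := by
  have hfin : Finite ((G.induce Tᶜ).ConnectedComponent) := by
    have : Finite ↥(Tᶜ) := Subtype.finite
    exact Quot.finite _
  have hne : (G.induce Tᶜ).connectedComponentMk ⟨a, ha⟩ ≠
      (G.induce Tᶜ).connectedComponentMk ⟨b, hb⟩ := by
    intro h
    exact hnr (ConnectedComponent.eq.mp h)
  exact Finite.one_lt_card_iff_nontrivial.mpr ⟨_, _, hne⟩

lemma aux_one_le (G : SimpleGraph V) [Fintype V] {T : Set V} {a : V} (ha : a ∈ Tᶜ) :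
    1 ≤ numComponents G T := by
  have hfin : Finite ((G.induce Tᶜ).ConnectedComponent) := by
    have : Finite ↥(Tᶜ) := Subtype.finite
    exact Quot.finite _
  have : Nonempty ((G.induce Tᶜ).ConnectedComponent) :=
    ⟨(G.induce Tᶜ).connectedComponentMk ⟨a, ha⟩⟩
  exact Nat.card_pos

section EdgeDelete

variable (G : SimpleGraph V) {T : Set V} {u v : V}

/-- walk splitting: a reachability in `G − T` either survives the deletion of the
edge `uv`, or both endpoints can reach `u` or `v` after the deletion. -/
lemma aux_split (hu : u ∈ Tᶜ) (hv : v ∈ Tᶜ) :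
    ∀ {a b : ↥(Tᶜ)}, (G.induce Tᶜ).Reachable a b →
      (((G.deleteEdges {s(u, v)}).induce Tᶜ).Reachable a b ∨
        ((((G.deleteEdges {s(u, v)}).induce Tᶜ).Reachable a ⟨u, hu⟩ ∨
          ((G.deleteEdges {s(u, v)}).induce Tᶜ).Reachable a ⟨v, hv⟩) ∧
         (((G.deleteEdges {s(u, v)}).induce Tᶜ).Reachable b ⟨u, hu⟩ ∨
          ((G.deleteEdges {s(u, v)}).induce Tᶜ).Reachable b ⟨v, hv⟩))) := by
  intro a b h
  set H := (G.deleteEdges {s(u, v)}).induce Tᶜ with hH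
  obtain ⟨p⟩ := h
  induction p with
  | nil => exact Or.inl (Reachable.refl _)
  | @cons a c b hadj p ih =>
      by_cases hcase : s(a.1, c.1) = s(u, v)
      · -- the edge is e itself; a.1, c.1 are u,v in some order
        have hends : (a.1 = u ∧ c.1 = v) ∨ (a.1 = v ∧ c.1 = u) := by
          rwa [Sym2.eq_iff] at hcase
        have haend : H.Reachable a ⟨u, hu⟩ ∨ H.Reachable a ⟨v, hv⟩ := by
          rcases hends with ⟨h1, _⟩ | ⟨h1, _⟩
          · left; rw [show a = (⟨u, hu⟩ : ↥(Tᶜ)) from Subtype.ext h1]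
          · right; rw [show a = (⟨v, hv⟩ : ↥(Tᶜ)) from Subtype.ext h1]
        have hcend : H.Reachable c ⟨u, hu⟩ ∨ H.Reachable c ⟨v, hv⟩ := by
          rcases hends with ⟨_, h2⟩ | ⟨_, h2⟩
          · right; rw [show c = (⟨v, hv⟩ : ↥(Tᶜ)) from Subtype.ext h2]
          · left; rw [show c = (⟨u, hu⟩ : ↥(Tᶜ)) from Subtype.ext h2]
        rcases ih with hreach | ⟨_, hbend⟩
        · refine Or.inr ⟨haend, ?_⟩
          rcases hcend with h | h
          · exact Or.inl (hreach.symm.trans h)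
          · exact Or.inr (hreach.symm.trans h)
        · exact Or.inr ⟨haend, hbend⟩
      · -- the edge survives
        have hadj' : H.Adj a c := by
          have : (G.deleteEdges {s(u, v)}).Adj a.1 c.1 := by
            rw [SimpleGraph.deleteEdges_adj]
            exact ⟨hadj, fun hmem => hcase (Set.mem_singleton_iff.mp hmem)⟩
          exact this
        rcases ih with hreach | ⟨hcend, hbend⟩
        · exact Or.inl (hadj'.reachable.trans hreach)
        · refine Or.inr ⟨?_, hbend⟩
          rcases hcend with h | h
          · exact Or.inl (hadj'.reachable.trans h)
          · exact Or.inr (hadj'.reachable.trans h)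

lemma aux_delete_edge_comps [Fintype V] (hu : u ∈ Tᶜ) (hv : v ∈ Tᶜ) :
    numComponents (G.deleteEdges {s(u, v)}) T ≤ numComponents G T + 1 := by
  classical
  set H := (G.deleteEdges {s(u, v)}).induce Tᶜ with hH
  set H0 := G.induce Tᶜ with hH0
  have hfin0 : Finite (H0.ConnectedComponent) := by
    have : Finite ↥(Tᶜ) := Subtype.finite
    exact Quot.finite _
  have hfin1 : Finite (H.ConnectedComponent) := by
    have : Finite ↥(Tᶜ) := Subtype.finite
    exact Quot.finite _
  have hmono : ∀ a b : ↥(Tᶜ), H.Reachable a b → H0.Reachable a b := by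
    intro a b hab
    refine hab.mono ?_
    intro x y hxy
    exact hxy.1
  -- lift map on components
  let F : H.ConnectedComponent → H0.ConnectedComponent :=
    Quot.lift (fun a => H0.connectedComponentMk a)
      (fun a b hab => ConnectedComponent.sound (hmono a b hab))
  let g : H.ConnectedComponent → H0.ConnectedComponent ⊕ Unit :=
    fun c => if c = H.connectedComponentMk ⟨v, hv⟩ then Sum.inr () else Sum.inl (F c)
  have hginj : Function.Injective g := by
    intro c1 c2 hg
    by_cases h1 : c1 = H.connectedComponentMk ⟨v, hv⟩ <;>
      by_cases h2 : c2 = H.connectedComponentMk ⟨v, hv⟩ <;>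
      simp only [g, h1, h2, if_pos, if_neg, if_true] at hg
    · exact h1.trans h2.symm
    · simp [h2] at hg
    · simp [h1] at hg
    · -- both mapped through F
      obtain ⟨a1, rfl⟩ := c1.exists_rep
      obtain ⟨a2, rfl⟩ := c2.exists_rep
      have hF : H0.connectedComponentMk a1 = H0.connectedComponentMk a2 := by
        simpa [F] using hg
      have hreach0 : H0.Reachable a1 a2 := ConnectedComponent.eq.mp hF
      rcases aux_split G hu hv hreach0 with hr | ⟨ha1, ha2⟩
      · exact ConnectedComponent.sound hr
      · have e1 : H.Reachable a1 ⟨u, hu⟩ := by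
          rcases ha1 with h | h
          · exact h
          · exact absurd (ConnectedComponent.sound h) h1
        have e2 : H.Reachable a2 ⟨u, hu⟩ := by
          rcases ha2 with h | h
          · exact h
          · exact absurd (ConnectedComponent.sound h) h2
        exact ConnectedComponent.sound (e1.trans e2.symm)
  calc numComponents (G.deleteEdges {s(u, v)}) T
      ≤ Nat.card (H0.ConnectedComponent ⊕ Unit) := Nat.card_le_card_of_injective g hginj
    _ = numComponents G T + 1 := by rw [Nat.card_sum, Nat.card_eq_fintype_card (α := Unit), Fintype.card_unit]; rfl

end EdgeDelete

/-- Matthews–Sumner counting: in a claw-free graph, every separating set `S₀`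
satisfies `κ · w(G−S₀) ≤ 2|S₀|`. -/
lemma aux_count [Fintype V] (G : SimpleGraph V) (hcf : ClawFree G) (S₀ : Finset V)
    (h2 : 2 ≤ numComponents G ↑S₀) :
    vconn G * numComponents G ↑S₀ ≤ 2 * S₀.card := by
  classical
  set H := G.induce (↑S₀ : Set V)ᶜ with hH
  have hfin : Finite (H.ConnectedComponent) := by
    have : Finite ↥((↑S₀ : Set V)ᶜ) := Subtype.finite
    exact Quot.finite _
  have : Fintype (H.ConnectedComponent) := Fintype.ofFinite _
  -- neighborhood of a component inside S₀
  set Nc : H.ConnectedComponent → Finset V :=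
    fun c => S₀.filter (fun s => ∃ z : ↥((↑S₀ : Set V)ᶜ),
      H.connectedComponentMk z = c ∧ G.Adj s z.1) with hNc
  -- each Nc c is a separating set of size ≥ κ
  have hNcκ : ∀ c : H.ConnectedComponent, vconn G ≤ (Nc c).card := by
    intro c
    obtain ⟨z, hz⟩ := c.exists_rep
    -- another component
    have hnt : Nontrivial (H.ConnectedComponent) :=
      Finite.one_lt_card_iff_nontrivial.mp h2
    obtain ⟨c', hc'⟩ := exists_ne c
    obtain ⟨z', hz'⟩ := c'.exists_rep
    -- z and z' are outside Nc c
    have hsub : (↑(Nc c) : Set V) ⊆ ↑S₀ := by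
      intro x hx
      exact Finset.mem_coe.mpr (Finset.mem_of_mem_filter _ (Finset.mem_coe.mp hx))
    have hzc : z.1 ∈ ((↑(Nc c)) : Set V)ᶜ := fun hmem => z.2 (hsub hmem)
    have hz'c : z'.1 ∈ ((↑(Nc c)) : Set V)ᶜ := fun hmem => z'.2 (hsub hmem)
    -- z cannot reach z' after removing Nc c
    have hnr : ¬ (G.induce ((↑(Nc c)) : Set V)ᶜ).Reachable ⟨z.1, hzc⟩ ⟨z'.1, hz'c⟩ := by
      intro hr
      -- closure set: the vertex set of component c
      have hclosed : ∀ x ∈ {x | ∃ hx : x ∈ ((↑S₀ : Set V))ᶜ, H.connectedComponentMk ⟨x, hx⟩ = c},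
          ∀ y, y ∉ (↑(Nc c) : Set V) → G.Adj x y →
          y ∈ {x | ∃ hx : x ∈ ((↑S₀ : Set V))ᶜ, H.connectedComponentMk ⟨x, hx⟩ = c} := by
        rintro x ⟨hx, hxc⟩ y hyNc hxy
        by_cases hyS : y ∈ (↑S₀ : Set V)
        · exfalso
          apply hyNc
          refine Finset.mem_coe.mpr (Finset.mem_filter.mpr ⟨hyS, ⟨⟨x, hx⟩, hxc, hxy.symm⟩⟩)
        · refine ⟨hyS, ?_⟩
          have hadj : H.Adj ⟨x, hx⟩ ⟨y, hyS⟩ := hxy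
          rw [← hxc]
          exact ConnectedComponent.sound hadj.symm.reachable
      have hzin : z.1 ∈ {x | ∃ hx : x ∈ ((↑S₀ : Set V))ᶜ, H.connectedComponentMk ⟨x, hx⟩ = c} :=
        ⟨z.2, by rwa [Subtype.coe_eta]⟩
      have := aux_closure G hclosed hr hzin
      obtain ⟨hz'S, hz'comp⟩ := this
      rw [Subtype.coe_eta] at hz'comp
      have : c' = c := by rw [← hz']; exact hz'comp
      exact hc' this
    have h2' : 2 ≤ numComponents G ↑(Nc c) := aux_two_le G hzc hz'c hnr
    exact Nat.sInf_le ⟨Nc c, rfl, h2'⟩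
  -- each s ∈ S₀ is adjacent to at most 2 components
  have hdeg : ∀ s ∈ S₀, (Finset.univ.filter (fun c => s ∈ Nc c)).card ≤ 2 := by
    intro s hs
    by_contra hlt
    push_neg at hlt
    obtain ⟨c1, hc1, c2, hc2, c3, hc3, h12, h13, h23⟩ := Finset.two_lt_card.mp hlt
    simp only [Finset.mem_filter, Finset.mem_univ, true_and, hNc] at hc1 hc2 hc3
    obtain ⟨z1, hz1c, hz1a⟩ := hc1.2
    obtain ⟨z2, hz2c, hz2a⟩ := hc2.2
    obtain ⟨z3, hz3c, hz3a⟩ := hc3.2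
    have hne : ∀ (zi zj : ↥((↑S₀ : Set V)ᶜ)) (ci cj : H.ConnectedComponent),
        H.connectedComponentMk zi = ci → H.connectedComponentMk zj = cj → ci ≠ cj →
        zi.1 ≠ zj.1 ∧ ¬ G.Adj zi.1 zj.1 := by
      intro zi zj ci cj hi hj hij
      constructor
      · intro h
        apply hij
        rw [← hi, ← hj, Subtype.ext h]
      · intro h
        apply hij
        rw [← hi, ← hj]
        exact ConnectedComponent.sound ((show H.Adj zi zj from h).reachable)
    obtain ⟨hne12, hna12⟩ := hne z1 z2 c1 c2 hz1c hz2c h12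
    obtain ⟨hne13, hna13⟩ := hne z1 z3 c1 c3 hz1c hz3c h13
    obtain ⟨hne23, hna23⟩ := hne z2 z3 c2 c3 hz2c hz3c h23
    exact hcf ⟨s, z1.1, z2.1, z3.1, hne12, hne13, hne23,
      hz1a, hz2a, hz3a, hna12, hna13, hna23⟩
  -- double counting
  have hsum : ∑ c : H.ConnectedComponent, (Nc c).card ≤ 2 * S₀.card := by
    have h1 : ∑ c : H.ConnectedComponent, (Nc c).card
        = ∑ s ∈ S₀, (Finset.univ.filter (fun c => s ∈ Nc c)).card := by
      have hcard : ∀ c : H.ConnectedComponent,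
          (Nc c).card = ∑ s ∈ S₀, if s ∈ Nc c then 1 else 0 := by
        intro c
        rw [Finset.sum_ite_mem, Finset.inter_eq_right.mpr (Finset.filter_subset _ _),
          Finset.card_eq_sum_ones]
      rw [Finset.sum_congr rfl (fun c _ => hcard c), Finset.sum_comm]
      refine Finset.sum_congr rfl (fun s _ => ?_)
      rw [Finset.card_filter]
    rw [h1]
    calc ∑ s ∈ S₀, (Finset.univ.filter (fun c => s ∈ Nc c)).card
        ≤ ∑ _s ∈ S₀, 2 := Finset.sum_le_sum hdeg
      _ = 2 * S₀.card := by rw [Finset.sum_const, smul_eq_mul, mul_comm]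
  calc vconn G * numComponents G ↑S₀
      = ∑ _c : H.ConnectedComponent, vconn G := by
        have hw : numComponents G ↑S₀ = (Finset.univ : Finset H.ConnectedComponent).card := by
          rw [numComponents, Nat.card_eq_fintype_card]
          exact (Finset.card_univ).symm
        rw [Finset.sum_const, smul_eq_mul, hw, mul_comm]
    _ ≤ ∑ c : H.ConnectedComponent, (Nc c).card := Finset.sum_le_sum (fun c _ => hNcκ c)
    _ ≤ 2 * S₀.card := hsum

/-- merging lemma: removing from `S` a set `W` of vertices all of whose members
have neighbours in both the component of `u` and the component of `d` decreases
the number of components by at most one (claw-freeness ensures `W` has no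
neighbours in the other components). -/
lemma aux_merge [Fintype V] [DecidableEq V] (G : SimpleGraph V) (hcf : ClawFree G)
    (S W : Finset V) (hWS : W ⊆ S) {u d : V}
    (hu : u ∈ ((↑S : Set V))ᶜ) (hd : d ∈ ((↑S : Set V))ᶜ)
    (hnr : ¬ (G.induce ((↑S : Set V))ᶜ).Reachable ⟨u, hu⟩ ⟨d, hd⟩)
    (hWadj : ∀ x ∈ W, (∃ a ∈ compOf G ↑S u, G.Adj x a) ∧
      ∃ b ∈ compOf G ↑S d, G.Adj x b) :
    numComponents G ↑S ≤ numComponents G ↑(S \ W) + 1 := by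
  classical
  set A : Set V := ((↑S : Set V))ᶜ with hA
  set B : Set V := ((↑(S \ W) : Set V))ᶜ with hB
  have hAB : A ⊆ B := by
    intro x hx hmem
    exact hx (Finset.mem_coe.mpr (Finset.sdiff_subset (Finset.mem_coe.mp hmem)))
  set H := G.induce A with hH
  set H' := G.induce B with hH'
  have hfin : Finite (H.ConnectedComponent) := by
    have : Finite ↥A := Subtype.finite
    exact Quot.finite _
  have hfin' : Finite (H'.ConnectedComponent) := by
    have : Finite ↥B := Subtype.finite
    exact Quot.finite _
  let F : H.ConnectedComponent → H'.ConnectedComponent :=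
    Quot.lift (fun a : ↥A => H'.connectedComponentMk ⟨a.1, hAB a.2⟩)
      (fun a b hab => ConnectedComponent.sound (aux_reach_transfer G hAB hab))
  set cu := H.connectedComponentMk ⟨u, hu⟩ with hcu
  set cd := H.connectedComponentMk ⟨d, hd⟩ with hcd
  -- two vertices in distinct components are distinct and non-adjacent
  have hsep : ∀ (p q : ↥A), H.connectedComponentMk p ≠ H.connectedComponentMk q →
      p.1 ≠ q.1 ∧ ¬ G.Adj p.1 q.1 := by
    intro p q hpq
    constructor
    · intro h; exact hpq (congrArg _ (Subtype.ext h))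
    · intro h; exact hpq (ConnectedComponent.sound ((show H.Adj p q from h)).reachable)
  -- closure: components other than cu, cd stay intact in G − (S \ W)
  have hclose : ∀ (x : ↥A), H.connectedComponentMk x ≠ cu → H.connectedComponentMk x ≠ cd →
      ∀ (y : ↥B), H'.Reachable ⟨x.1, hAB x.2⟩ y → y.1 ∈ compOf G ↑S x.1 := by
    intro x hxu hxd y hreach
    have hclosed : ∀ p ∈ compOf G ↑S x.1, ∀ q, q ∉ (↑(S \ W) : Set V) → G.Adj p q →
        q ∈ compOf G ↑S x.1 := by
      rintro p ⟨hx', hp, hrp⟩ q hqSW hpq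
      by_cases hqS : q ∈ (↑S : Set V)
      · -- q ∈ W; derive a claw
        exfalso
        have hqW : q ∈ W := by
          have hq : q ∈ S := Finset.mem_coe.mp hqS
          by_contra hqW
          exact hqSW (Finset.mem_coe.mpr (Finset.mem_sdiff.mpr ⟨hq, hqW⟩))
        obtain ⟨⟨a, ⟨hu2, ha, hra⟩, haq⟩, ⟨b, ⟨hd2, hb, hrb⟩, hbq⟩⟩ := hWadj q hqW
        -- a, b, p lie in the components cu, cd, (comp of x) resp., all distinct
        have hau : H.connectedComponentMk ⟨a, ha⟩ = cu :=
          (ConnectedComponent.sound hra).symm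
        have hbd : H.connectedComponentMk ⟨b, hb⟩ = cd :=
          (ConnectedComponent.sound hrb).symm
        have hpx : H.connectedComponentMk ⟨p, hp⟩ = H.connectedComponentMk x := by
          refine ConnectedComponent.sound ?_
          have := hrp
          rw [Subtype.coe_eta] at this
          exact this.symm
        have hne_ab : H.connectedComponentMk ⟨a, ha⟩ ≠ H.connectedComponentMk ⟨b, hb⟩ := by
          rw [hau, hbd]
          intro h
          exact hnr (ConnectedComponent.eq.mp h)
        have hne_ap : H.connectedComponentMk ⟨a, ha⟩ ≠ H.connectedComponentMk ⟨p, hp⟩ := by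
          rw [hau, hpx]; exact fun h => hxu h.symm
        have hne_bp : H.connectedComponentMk ⟨b, hb⟩ ≠ H.connectedComponentMk ⟨p, hp⟩ := by
          rw [hbd, hpx]; exact fun h => hxd h.symm
        obtain ⟨hab1, hab2⟩ := hsep _ _ hne_ab
        obtain ⟨hap1, hap2⟩ := hsep _ _ hne_ap
        obtain ⟨hbp1, hbp2⟩ := hsep _ _ hne_bp
        exact hcf ⟨q, a, b, p, hab1, hap1, hbp1, haq, hbq, hpq.symm,
          hab2, hap2, hbp2⟩
      · -- q survives; it joins the component of x
        refine ⟨hx', hqS, ?_⟩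
        have hadjH : H.Adj ⟨p, hp⟩ ⟨q, hqS⟩ := hpq
        have := hrp
        rw [Subtype.coe_eta] at this
        exact this.trans hadjH.reachable
    have hxin : x.1 ∈ compOf G ↑S x.1 := ⟨x.2, x.2, by rw [Subtype.coe_eta]⟩
    exact aux_closure G hclosed hreach hxin
  -- injection
  let g : H.ConnectedComponent → H'.ConnectedComponent ⊕ Unit :=
    fun c => if c = cd then Sum.inr () else Sum.inl (F c)
  have hginj : Function.Injective g := by
    intro c1 c2 hg
    by_cases h1 : c1 = cd <;> by_cases h2 : c2 = cd <;>
      simp only [g, h1, h2, if_pos, if_neg, if_true] at hg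
    · exact h1.trans h2.symm
    · simp [h2] at hg
    · simp [h1] at hg
    · obtain ⟨x1, rfl⟩ := c1.exists_rep
      obtain ⟨x2, rfl⟩ := c2.exists_rep
      have hFr : H'.Reachable ⟨x1.1, hAB x1.2⟩ ⟨x2.1, hAB x2.2⟩ := by
        apply ConnectedComponent.eq.mp
        simpa [F] using hg
      by_cases hx1u : H.connectedComponentMk x1 = cu
      · by_cases hx2u : H.connectedComponentMk x2 = cu
        · exact hx1u.trans hx2u.symm
        · have := hclose x2 hx2u h2 ⟨x1.1, hAB x1.2⟩ hFr.symm
          obtain ⟨hx2', hx1', hr⟩ := this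
          apply ConnectedComponent.sound
          rw [Subtype.coe_eta] at hr
          exact hr.symm
      · have := hclose x1 hx1u h1 ⟨x2.1, hAB x2.2⟩ hFr
        obtain ⟨hx1', hx2', hr⟩ := this
        apply ConnectedComponent.sound
        rw [Subtype.coe_eta] at hr
        exact hr
  calc numComponents G ↑S
      ≤ Nat.card (H'.ConnectedComponent ⊕ Unit) := Nat.card_le_card_of_injective g hginj
    _ = numComponents G ↑(S \ W) + 1 := by rw [Nat.card_sum, Nat.card_eq_fintype_card (α := Unit), Fintype.card_unit]; rfl

/-- Let `G` be minimally `t`-tough and claw-free, `e = uv` a non-bridge edge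
with `D(e) ≠ ∅`.  If `|S(e)| ≥ ⌈3t⌉`, then for every component `Cᵢ` of
`G − S(e)` other than `C(e)` (i.e. the component of any `w ∈ D(e)`),
`|N_{S(e)}(C(e)) ∩ N_{S(e)}(Cᵢ)| ≤ 2t − 1`. -/
theorem min_good_cut_common_neighbors_bound [Fintype V] (G : SimpleGraph V)
    (t : ℚ) (hmt : MinimallyTough G t) (hcf : ClawFree G)
    (u v : V) (huv : G.Adj u v) (hnb : ¬ IsBridgeIn G (∅ : Set V) u v)
    (S : Finset V) (hS : IsMinGoodCut G t u v S)
    (hD : (Dset G ↑S u).Nonempty)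
    (hk : (⌈3 * t⌉ : ℚ) ≤ (S.card : ℚ)) :
    ∀ w ∈ Dset G ↑S u,
      (((nbrsIn G ↑S (compOf G ↑S u) ∩ nbrsIn G ↑S (compOf G ↑S w)).ncard : ℚ))
        ≤ 2 * t - 1 := by
  classical
  obtain ⟨⟨hg1, hg2, huS, hvS, hadjuv, hbridge⟩, hmin⟩ := hS
  intro d hdD
  have huA : u ∈ ((↑S : Set V))ᶜ := huS
  have hvA : v ∈ ((↑S : Set V))ᶜ := hvS
  obtain ⟨hdA, hdnc⟩ := hdD
  have hnr : ¬ (G.induce ((↑S : Set V))ᶜ).Reachable ⟨u, huA⟩ ⟨d, hdA⟩ :=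
    fun hr => hdnc ⟨huA, hdA, hr⟩
  set w := numComponents G ↑S with hw
  have hw1 : 1 ≤ w := aux_one_le G huA
  have ht0 : 0 < t := by
    by_contra h
    push_neg at h
    have h1 : ((S.card : ℚ)) / t ≤ 0 :=
      div_nonpos_of_nonneg_of_nonpos (by positivity) h
    have h2 : (w : ℚ) ≤ 0 := le_trans hg1 h1
    have h3 : (1 : ℚ) ≤ (w : ℚ) := by exact_mod_cast hw1
    linarith
  have hw2 : 2 ≤ w := aux_two_le G huA hdA hnr
  have hge3t : 3 * t ≤ (S.card : ℚ) := le_trans (Int.le_ceil _) hk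
  have hwe : numComponents (G.deleteEdges {s(u, v)}) ↑S ≤ w + 1 :=
    aux_delete_edge_comps G huA hvA
  have hmlt : (S.card : ℚ) < t * (w + 1) := by
    have h1 : (S.card : ℚ) / t < numComponents (G.deleteEdges {s(u, v)}) ↑S := hg2
    have h2 : ((numComponents (G.deleteEdges {s(u, v)}) ↑S : ℚ)) ≤ (w : ℚ) + 1 := by
      exact_mod_cast hwe
    rw [div_lt_iff₀ ht0] at h1
    nlinarith
  have hw3 : 3 ≤ w := by
    have h1 : (2 : ℚ) < (w : ℚ) := by nlinarith
    have h2 : 2 < w := by exact_mod_cast h1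
    omega
  -- the vertex connectivity and the identity 2t = κ
  have hκmem : ∃ T : Finset V, T.card = vconn G ∧ 2 ≤ numComponents G ↑T := by
    have hne : {k | ∃ T : Finset V, T.card = k ∧ 2 ≤ numComponents G ↑T}.Nonempty :=
      ⟨S.card, S, rfl, hw2⟩
    exact Nat.sInf_mem hne
  obtain ⟨T, hTcard, hT2⟩ := hκmem
  have htT : t ≤ (vconn G : ℚ) / 2 := by
    have h := hmt.1.1 T hT2
    rw [hTcard] at h
    refine le_trans h ?_
    have h2 : (2 : ℚ) ≤ (numComponents G ↑T : ℚ) := by exact_mod_cast hT2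
    have h0 : (0 : ℚ) ≤ (vconn G : ℚ) := by positivity
    exact div_le_div_of_nonneg_left h0 (by norm_num) h2
  have hκt : (vconn G : ℚ) / 2 ≤ t := by
    obtain ⟨S₀, h2₀, ht₀⟩ := hmt.1.2
    have hcount := aux_count G hcf S₀ h2₀
    have hw₀ : (0 : ℚ) < (numComponents G ↑S₀ : ℚ) := by
      have : 0 < numComponents G ↑S₀ := by omega
      exact_mod_cast this
    rw [ht₀, div_le_div_iff₀ (by norm_num) hw₀]
    have : ((vconn G * numComponents G ↑S₀ : ℕ) : ℚ) ≤ ((2 * S₀.card : ℕ) : ℚ) := by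
      exact_mod_cast hcount
    push_cast at this
    linarith
  have h2t : 2 * t = (vconn G : ℚ) := by linarith
  -- the common neighbourhood as a finset
  set Wset := nbrsIn G ↑S (compOf G ↑S u) ∩ nbrsIn G ↑S (compOf G ↑S d) with hWset
  set WF : Finset V := S.filter (· ∈ Wset) with hWF
  have hWsub : WF ⊆ S := Finset.filter_subset _ _
  have hWeq : Wset = ↑WF := by
    ext x
    simp only [hWF, Finset.coe_filter, Set.mem_setOf_eq]
    constructor
    · intro hx
      exact ⟨hx.1.1.1, hx⟩
    · exact fun h => h.2
  have hWadj : ∀ x ∈ WF, (∃ a ∈ compOf G ↑S u, G.Adj x a) ∧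
      ∃ b ∈ compOf G ↑S d, G.Adj x b := by
    intro x hx
    have hx' : x ∈ Wset := (Finset.mem_filter.mp hx).2
    obtain ⟨⟨_, a, ha, hxa⟩, ⟨_, b, hb, hxb⟩⟩ := hx'
    exact ⟨⟨a, ha, hxa⟩, ⟨b, hb, hxb⟩⟩
  have hmerge : w ≤ numComponents G ↑(S \ WF) + 1 :=
    aux_merge G hcf S WF hWsub huA hdA hnr hWadj
  set w' := numComponents G ↑(S \ WF) with hw'
  have hw'2 : 2 ≤ w' := by omega
  have htough := hmt.1.1 (S \ WF) hw'2
  have hcardsub : ((S \ WF).card : ℚ) = (S.card : ℚ) - WF.card := by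
    rw [Finset.card_sdiff_of_subset hWsub]
    have : WF.card ≤ S.card := Finset.card_le_card hWsub
    push_cast [this]
    ring
  have hw'pos : (0 : ℚ) < (w' : ℚ) := by
    have : 0 < w' := by omega
    exact_mod_cast this
  have h5 : t * (w' : ℚ) ≤ (S.card : ℚ) - WF.card := by
    rw [le_div_iff₀ hw'pos] at htough
    rw [← hcardsub]
    linarith
  have h6 : (WF.card : ℚ) < 2 * t := by
    have hww' : ((w : ℚ) - 1) ≤ (w' : ℚ) := by
      have : w - 1 ≤ w' := by omega
      have h := this
      have hcast : ((w - 1 : ℕ) : ℚ) ≤ (w' : ℚ) := by exact_mod_cast h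
      rwa [Nat.cast_sub (by omega : 1 ≤ w)] at hcast
    nlinarith
  have h7 : WF.card < vconn G := by
    have : (WF.card : ℚ) < (vconn G : ℚ) := by rw [← h2t]; exact h6
    exact_mod_cast this
  have h8 : (WF.card : ℚ) ≤ 2 * t - 1 := by
    have h9 : WF.card + 1 ≤ vconn G := h7
    have h10 : (WF.card : ℚ) + 1 ≤ (vconn G : ℚ) := by exact_mod_cast h9
    linarith [h2t]
  show ((Wset.ncard : ℚ)) ≤ 2 * t - 1
  rw [hWeq, Set.ncard_coe_finset]
  exact h8
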